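/- Let λ be an infinite cardinal with λ^{ℵ₀} = λ and let C = {δ_ξ : ξ < λ⁺} be the increasing enumeration of a club subset of λ⁺. Then there is a function K : [λ⁺]^{ℵ₀} → λ such that whenever A, B are countable subsets of λ⁺ with K(A) = K(B) and there exists ξ < λ⁺ with A ∩ [δ_ξ, δ_{ξ+1}) ≠ ∅ and B ∩ [δ_ξ, δ_{ξ+1}) ≠ ∅, then A ∩ δ_{ξ+1} = B ∩ δ_{ξ+1}; in particular A ∩ B is an initial segment of both A and B. -/

import Mathlib

open Cardinal Ordinal Set

/-- `C` is a closed unbounded subset of the ordinal `κ`. -/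
def IsClubIn (C : Set Ordinal) (κ : Ordinal) : Prop :=
  C ⊆ Set.Iio κ ∧ (∀ x < κ, ∃ y ∈ C, x < y) ∧
    ∀ s ⊆ C, s.Nonempty → sSup s < κ → sSup s ∈ C

/-! ### Auxiliary machinery: order-type positions inside countable sets of ordinals -/

noncomputable def po (S : Set Ordinal) (x : Ordinal) : Ordinal.{1} :=
  Ordinal.type (Subrel ((· < ·) : Ordinal → Ordinal → Prop) (· ∈ S ∩ Set.Iio x))

theorem po_eq_typein (S : Set Ordinal) {x y : Ordinal} (hx : x ∈ S) (hxy : x < y) :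
    po S x = Ordinal.typein (Subrel ((· < ·) : Ordinal → Ordinal → Prop) (· ∈ S ∩ Set.Iio y))
      ⟨x, hx, hxy⟩ := by
  rw [← Ordinal.type_subrel]
  apply Ordinal.type_eq.2
  constructor
  refine RelIso.mk (Equiv.mk
    (fun a => ⟨⟨a.1, a.2.1, lt_trans a.2.2 hxy⟩, a.2.2⟩)
    (fun b => ⟨b.1.1, b.1.2.1, b.2⟩) (fun a => rfl) (fun b => rfl)) ?_
  intro a b
  rfl

theorem po_lt {S : Set Ordinal} {x y : Ordinal} (hx : x ∈ S) (hxy : x < y) :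
    po S x < po S y := by
  rw [po_eq_typein S hx hxy]
  exact Ordinal.typein_lt_type _ _

theorem po_surj {S : Set Ordinal} {y : Ordinal} {i : Ordinal.{1}} (hi : i < po S y) :
    ∃ a, a ∈ S ∧ a < y ∧ po S a = i := by
  obtain ⟨a, ha⟩ := Ordinal.typein_surj _ hi
  exact ⟨a.1, a.2.1, a.2.2, by rw [po_eq_typein S a.2.1 a.2.2]; exact ha⟩

theorem po_inj {S : Set Ordinal} {x y : Ordinal} (hx : x ∈ S) (hy : y ∈ S)
    (h : po S x = po S y) : x = y := by
  rcases lt_trichotomy x y with h' | h' | h'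
  · exact absurd h (po_lt hx h').ne
  · exact h'
  · exact absurd h.symm (po_lt hy h').ne

theorem po_card_le {S : Set Ordinal} {x : Ordinal} (hS : S.Countable) :
    (po S x).card ≤ ℵ₀ := by
  rw [po, Ordinal.card_type]
  have : (S ∩ Set.Iio x).Countable := hS.mono Set.inter_subset_left
  exact Cardinal.mk_le_aleph0_iff.2 this.to_subtype

open Classical in
noncomputable def pdown (o : Ordinal.{1}) : Ordinal.{0} :=
  if h : ∃ a : Ordinal.{0}, Ordinal.lift.{1} a = o then h.choose else 0

theorem pdown_lift (a : Ordinal.{0}) : pdown (Ordinal.lift.{1} a) = a := by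
  rw [pdown, dif_pos (⟨a, rfl⟩ : ∃ b : Ordinal.{0}, Ordinal.lift.{1} b = Ordinal.lift.{1} a)]
  exact Ordinal.lift_inj.1
    (⟨a, rfl⟩ : ∃ b : Ordinal.{0}, Ordinal.lift.{1} b = Ordinal.lift.{1} a).choose_spec

theorem po_lift {S : Set Ordinal} {x : Ordinal} (hS : S.Countable) :
    ∃ a : Ordinal.{0}, Ordinal.lift.{1} a = po S x ∧ a.card ≤ ℵ₀ := by
  have h1 : (po S x).card ≤ ℵ₀ := po_card_le hS
  have h2 : po S x ≤ Ordinal.lift.{1,0} (Cardinal.aleph 1).ord := by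
    rw [Cardinal.lift_ord]
    refine le_of_lt (Cardinal.lt_ord.2 (lt_of_le_of_lt h1 ?_))
    rw [← Cardinal.lift_aleph0.{1,0}, Cardinal.lift_lt]
    exact Cardinal.aleph0_lt_aleph_one
  obtain ⟨a, ha⟩ := Ordinal.mem_range_lift_of_le h2
  refine ⟨a, ha, ?_⟩
  have := congrArg Ordinal.card ha
  rw [← Ordinal.lift_card] at this
  rw [← Cardinal.lift_le.{1,0}, this, Cardinal.lift_aleph0]
  exact h1

noncomputable def po0 (S : Set Ordinal) (x : Ordinal) : Ordinal.{0} := pdown (po S x)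

theorem po0_spec {S : Set Ordinal} {x : Ordinal} (hS : S.Countable) :
    Ordinal.lift.{1} (po0 S x) = po S x ∧ (po0 S x).card ≤ ℵ₀ := by
  obtain ⟨a, ha, hc⟩ := po_lift (x := x) hS
  have : po0 S x = a := by rw [po0, ← ha, pdown_lift]
  rw [this, ha]
  exact ⟨rfl, hc⟩

theorem po0_lt {S : Set Ordinal} {x y : Ordinal} (hS : S.Countable) (hx : x ∈ S) (hxy : x < y) :
    po0 S x < po0 S y := by
  rw [← Ordinal.lift_lt.{1}, (po0_spec hS).1, (po0_spec hS).1]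
  exact po_lt hx hxy

theorem po0_inj {S : Set Ordinal} {x y : Ordinal} (hS : S.Countable) (hx : x ∈ S) (hy : y ∈ S)
    (h : po0 S x = po0 S y) : x = y := by
  refine po_inj hx hy ?_
  rw [← (po0_spec hS).1, ← (po0_spec hS).1, h]

theorem po0_surj {S : Set Ordinal} {y : Ordinal} {i : Ordinal.{0}} (hS : S.Countable)
    (hi : i < po0 S y) : ∃ a, a ∈ S ∧ a < y ∧ po0 S a = i := by
  have : Ordinal.lift.{1} i < po S y := by
    rw [← (po0_spec hS).1]; exact Ordinal.lift_lt.2 hi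
  obtain ⟨a, haS, hay, ha⟩ := po_surj this
  refine ⟨a, haS, hay, ?_⟩
  have := (po0_spec (x := a) hS).1
  rw [ha] at this
  exact Ordinal.lift_inj.1 this

theorem po0_lt_ord {S : Set Ordinal} {x : Ordinal} (hS : S.Countable) {c : Cardinal}
    (hc : ℵ₀ < c) : po0 S x < c.ord :=
  Cardinal.lt_ord.2 (lt_of_le_of_lt (po0_spec hS).2 hc)

/-! ### Cardinality of collections of countable subsets -/

universe u

theorem mk_countable_bounded_le {α : Type u} (B : Set α) :
    #{s : Set α // s.Countable ∧ s ⊆ B} ≤ (#B + 1) ^ (ℵ₀ : Cardinal.{u}) := by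
  have hrep : ∀ s : {s : Set α // s.Countable ∧ s ⊆ B},
      ∃ g : ULift.{u} ℕ → Option (ULift.{u} ↥B),
        s.1 = {p | ∃ h : p ∈ B, ∃ n, g n = some (ULift.up ⟨p, h⟩)} := by
    rintro ⟨s, hc, hB⟩
    rcases s.eq_empty_or_nonempty with rfl | hne
    · refine ⟨fun _ => none, ?_⟩
      ext p
      simp
    · obtain ⟨f, hf⟩ := hc.exists_eq_range hne
      refine ⟨fun n => some (ULift.up ⟨f n.down, hB (by rw [hf]; exact Set.mem_range_self _)⟩), ?_⟩
      ext p
      simp only [hf, Set.mem_range, Set.mem_setOf_eq, Option.some_inj]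
      constructor
      · rintro ⟨n, rfl⟩
        exact ⟨hB (by rw [hf]; exact Set.mem_range_self _), ULift.up n, rfl⟩
      · rintro ⟨h, n, hn⟩
        have := congrArg (fun o => (ULift.down o).1) hn
        exact ⟨n.down, this⟩
  choose g hg using hrep
  have hinj : Function.Injective g := by
    intro s t hst
    apply Subtype.ext
    rw [hg s, hg t, hst]
  calc #{s : Set α // s.Countable ∧ s ⊆ B} ≤ #(ULift.{u} ℕ → Option (ULift.{u} ↥B)) :=
        Cardinal.mk_le_of_injective hinj
    _ = (#B + 1) ^ (ℵ₀ : Cardinal.{u}) := by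
        rw [← Cardinal.power_def, Cardinal.mk_option, Cardinal.mk_uLift, Cardinal.mk_uLift,
          Cardinal.mk_nat, Cardinal.lift_aleph0, Cardinal.lift_id]

/-! ### The interval support of a set -/

/-- The set of indices `ζ < κ` whose interval `[δ ζ, δ (ζ+1))` meets `A`. -/
def EEs (δ : Ordinal → Ordinal) (κ : Ordinal) (A : Set Ordinal) : Set Ordinal :=
  {ζ | ζ < κ ∧ (A ∩ Set.Ico (δ ζ) (δ (ζ + 1))).Nonempty}

theorem EEs_countable {δ : Ordinal → Ordinal} {κ : Ordinal}
    (hmono : StrictMonoOn δ (Set.Iio κ)) (hsucc : ∀ ξ < κ, ξ + 1 < κ)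
    {A : Set Ordinal} (hA : A.Countable) : (EEs δ κ A).Countable := by
  have hstep : ∀ ζ ζ' : Ordinal, ζ < ζ' → ζ' < κ → δ (ζ + 1) ≤ δ ζ' := by
    intro ζ ζ' h h'
    rcases eq_or_lt_of_le (show ζ + 1 ≤ ζ' by rwa [Ordinal.add_one_eq_succ, Order.succ_le_iff])
      with he | hlt
    · exact le_of_eq (congrArg δ he)
    · exact le_of_lt (hmono (Set.mem_Iio.2 (hsucc ζ (lt_trans h h'))) (Set.mem_Iio.2 h') hlt)
  have hch : ∀ ζ : ↥(EEs δ κ A), ∃ a : ↥A, a.1 ∈ Set.Ico (δ ζ.1) (δ (ζ.1 + 1)) := by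
    rintro ⟨ζ, hζκ, a, ha, hia⟩
    exact ⟨⟨a, ha⟩, hia⟩
  choose pk hpk using hch
  have hinj : Function.Injective pk := by
    intro ζ ζ' h
    apply Subtype.ext
    by_contra hne
    rcases lt_trichotomy ζ.1 ζ'.1 with hl | hl | hl
    · have h1 : (pk ζ : Ordinal) < δ (ζ.1 + 1) := (hpk ζ).2
      have h2 : δ ζ'.1 ≤ (pk ζ' : Ordinal) := (hpk ζ').1
      rw [h] at h1
      exact absurd (lt_of_lt_of_le h1 (hstep _ _ hl ζ'.2.1)) (not_lt_of_ge h2)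
    · exact hne hl
    · have h1 : (pk ζ' : Ordinal) < δ (ζ'.1 + 1) := (hpk ζ').2
      have h2 : δ ζ.1 ≤ (pk ζ : Ordinal) := (hpk ζ).1
      rw [h] at h2
      exact absurd (lt_of_lt_of_le h1 (hstep _ _ hl ζ.2.1)) (not_lt_of_ge h2)
  haveI : Countable ↥A := hA.to_subtype
  haveI : Countable ↥(EEs δ κ A) := hinj.countable
  exact Set.countable_coe_iff.1 this

/-! ### The main theorem -/

set_option maxHeartbeats 1000000 in
/-- Lemma 2: Let `λ` be infinite with `λ^ℵ₀ = λ`, and let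
`C = {δ_ξ : ξ < λ⁺}` be the increasing (continuous) enumeration of a club of `λ⁺`.
Then there is `K : [λ⁺]^{ℵ₀} → λ` such that whenever `A`, `B` are countably infinite
subsets of `λ⁺` with `K A = K B` which both meet some interval `[δ_ξ, δ_{ξ+1})`,
then `A ∩ δ_{ξ+1} = B ∩ δ_{ξ+1}` (so `A ∩ B` is an initial segment of both). -/
theorem statement7 (lam : Cardinal.{0}) (hinf : ℵ₀ ≤ lam) (hpow : lam ^ ℵ₀ = lam)
    (δ : Ordinal → Ordinal)
    (hmono : StrictMonoOn δ (Set.Iio (Order.succ lam).ord))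
    (hmaps : ∀ ξ < (Order.succ lam).ord, δ ξ < (Order.succ lam).ord)
    (hclub : IsClubIn (δ '' Set.Iio (Order.succ lam).ord) (Order.succ lam).ord) :
    ∃ K : Set Ordinal → Ordinal,
      (∀ A ⊆ Set.Iio (Order.succ lam).ord, A.Countable → A.Infinite → K A < lam.ord) ∧
      ∀ A B, A ⊆ Set.Iio (Order.succ lam).ord → B ⊆ Set.Iio (Order.succ lam).ord →
        A.Countable → A.Infinite → B.Countable → B.Infinite → K A = K B →
        ∀ ξ < (Order.succ lam).ord,
          (A ∩ Set.Ico (δ ξ) (δ (ξ + 1))).Nonempty →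
          (B ∩ Set.Ico (δ ξ) (δ (ξ + 1))).Nonempty →
          A ∩ Set.Iio (δ (ξ + 1)) = B ∩ Set.Iio (δ (ξ + 1)) := by
  classical
  set κ := (Order.succ lam).ord with hκ
  set L := lam.ord with hL
  -- basic facts
  have h2lam : (2 : Cardinal) ≤ lam := le_trans (by exact_mod_cast (Cardinal.nat_lt_aleph0 2).le) hinf
  have haleph0_lt : ℵ₀ < lam := by
    calc ℵ₀ < 2 ^ ℵ₀ := Cardinal.cantor ℵ₀
    _ ≤ lam ^ ℵ₀ := Cardinal.power_le_power_right h2lam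
    _ = lam := hpow
  have hκlim : Order.IsSuccLimit κ := Cardinal.isSuccLimit_ord (le_trans hinf (le_of_lt (Order.lt_succ _)))
  have hsucc : ∀ ξ < κ, ξ + 1 < κ := by
    intro ξ h
    rw [Ordinal.add_one_eq_succ]
    exact hκlim.succ_lt h
  have hcard : ∀ ξ < κ, ξ.card ≤ lam := by
    intro ξ h
    exact Order.lt_succ_iff.1 (Cardinal.lt_ord.1 h)
  have hIioL : #(Set.Iio L) = Cardinal.lift.{1} lam := by
    rw [Ordinal.mk_Iio_ordinal, hL, Cardinal.card_ord]
  have haleph0L : ℵ₀ ≤ Cardinal.lift.{1} lam := Cardinal.aleph0_le_lift.2 hinf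
  have hliftpow : (Cardinal.lift.{1} lam + 1) ^ (ℵ₀ : Cardinal.{1}) = Cardinal.lift.{1} lam := by
    rw [Cardinal.add_one_eq haleph0L, ← Cardinal.lift_aleph0.{1,0}, ← Cardinal.lift_power, hpow]
  -- the injections F ζ : Iio ζ → Iio L
  have hFex : ∀ ζ : Ordinal, ∃ f : Ordinal → Ordinal, ζ < κ →
      (∀ η < ζ, f η < L) ∧ Set.InjOn f (Set.Iio ζ) := by
    intro ζ
    by_cases hζ : ζ < κ
    · have hle : #(Set.Iio ζ) ≤ #(Set.Iio L) := by
        rw [Ordinal.mk_Iio_ordinal, hIioL, Cardinal.lift_le]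
        exact hcard ζ hζ
      obtain ⟨emb⟩ := (Cardinal.le_def _ _).1 hle
      refine ⟨fun η => if h : η < ζ then (emb ⟨η, h⟩).1 else 0, fun _ => ⟨?_, ?_⟩⟩
      · intro η hη
        simp only [dif_pos hη]
        exact (emb ⟨η, hη⟩).2
      · intro η hη η' hη' hee
        simp only [dif_pos (Set.mem_Iio.1 hη), dif_pos (Set.mem_Iio.1 hη')] at hee
        have := emb.injective (Subtype.ext hee)
        exact congrArg Subtype.val this
    · exact ⟨fun _ => 0, fun h => absurd h hζ⟩
  choose F hF using hFex
  -- the function eps, by well-founded recursion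
  let eps : Ordinal → Ordinal → Bool := Ordinal.lt_wf.fix
    (C := fun _ => Ordinal → Bool)
    (fun ζ ih η => if h : ∃ x, x < η ∧ η < ζ ∧ F η x = F ζ η
      then !(ih η h.choose_spec.2.1 h.choose) else false)
  have eps_eq : ∀ ζ η, eps ζ η =
      if h : ∃ x, x < η ∧ η < ζ ∧ F η x = F ζ η then !(eps η h.choose) else false := by
    intro ζ η
    have := Ordinal.lt_wf.fix_eq
      (C := fun _ => Ordinal → Bool)
      (fun ζ ih η => if h : ∃ x, x < η ∧ η < ζ ∧ F η x = F ζ η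
        then !(ih η h.choose_spec.2.1 h.choose) else false) ζ
    exact congrFun this η
  -- the key combinatorial property
  have hP : ∀ x η ζ : Ordinal, η < κ → x < η → η < ζ → F ζ η = F η x → eps ζ η = eps η x →
      False := by
    intro x η ζ hηκ hxη hηζ hFeq hEeq
    have hex : ∃ x', x' < η ∧ η < ζ ∧ F η x' = F ζ η := ⟨x, hxη, hηζ, hFeq.symm⟩
    rw [eps_eq ζ η, dif_pos hex] at hEeq
    have hc := hex.choose_spec
    have hxx : hex.choose = x := by
      refine (hF η hηκ).2 (Set.mem_Iio.2 hc.1) (Set.mem_Iio.2 hxη) ?_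
      rw [hc.2.2, hFeq]
    rw [hxx] at hEeq
    simp at hEeq
  -- the injections e ξ on countable subsets of Iio (δ (ξ+1))
  have hEex : ∀ ξ : Ordinal, ∃ e : Set Ordinal → Ordinal, ξ < κ →
      (∀ s, s.Countable → s ⊆ Set.Iio (δ (ξ + 1)) → e s < L) ∧
      (∀ s t, s.Countable → s ⊆ Set.Iio (δ (ξ + 1)) → t.Countable → t ⊆ Set.Iio (δ (ξ + 1)) →
        e s = e t → s = t) := by
    intro ξ
    by_cases hξ : ξ < κ
    · have hle : #{s : Set Ordinal // s.Countable ∧ s ⊆ Set.Iio (δ (ξ + 1))} ≤ #(Set.Iio L) := by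
        refine le_trans (mk_countable_bounded_le _) ?_
        have hBcard : #(Set.Iio (δ (ξ + 1))) ≤ Cardinal.lift.{1} lam := by
          rw [Ordinal.mk_Iio_ordinal, Cardinal.lift_le]
          exact hcard _ (hmaps _ (hsucc ξ hξ))
        calc (#(Set.Iio (δ (ξ + 1))) + 1) ^ (ℵ₀ : Cardinal.{1})
            ≤ (Cardinal.lift.{1} lam + 1) ^ (ℵ₀ : Cardinal.{1}) :=
              Cardinal.power_le_power_right (add_le_add_left hBcard 1)
          _ = Cardinal.lift.{1} lam := hliftpow
          _ = #(Set.Iio L) := hIioL.symm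
      obtain ⟨emb⟩ := (Cardinal.le_def _ _).1 hle
      refine ⟨fun s => if h : s.Countable ∧ s ⊆ Set.Iio (δ (ξ + 1)) then (emb ⟨s, h⟩).1 else 0,
        fun _ => ⟨?_, ?_⟩⟩
      · intro s hs1 hs2
        simp only [dif_pos (⟨hs1, hs2⟩ : s.Countable ∧ s ⊆ Set.Iio (δ (ξ + 1)))]
        exact (emb ⟨s, hs1, hs2⟩).2
      · intro s t hs1 hs2 ht1 ht2 hee
        simp only [dif_pos (⟨hs1, hs2⟩ : s.Countable ∧ s ⊆ Set.Iio (δ (ξ + 1))),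
          dif_pos (⟨ht1, ht2⟩ : t.Countable ∧ t ⊆ Set.Iio (δ (ξ + 1)))] at hee
        have := emb.injective (Subtype.ext hee)
        exact congrArg Subtype.val this
    · exact ⟨fun _ => 0, fun h => absurd h hξ⟩
  choose e he using hEex
  -- the global coding injection G
  set B2 : Set (Ordinal × Ordinal) := Set.Iio L ×ˢ Set.Iio L with hB2
  set B4 : Set (Ordinal × Ordinal × Ordinal × Ordinal) :=
    Set.Iio L ×ˢ (Set.Iio L ×ˢ (Set.Iio L ×ˢ Set.Iio L)) with hB4
  have hmkprod : ∀ {X Y : Type 1} (s : Set X) (t : Set Y), #↥s = Cardinal.lift.{1} lam →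
      #↥t = Cardinal.lift.{1} lam → #↥(s ×ˢ t) = Cardinal.lift.{1} lam := by
    intro X Y s t hs ht
    rw [Cardinal.mk_congr (Equiv.Set.prod s t), Cardinal.mk_prod, hs, ht, Cardinal.lift_id,
      Cardinal.mul_eq_self haleph0L]
  have hmkB2 : #↥B2 = Cardinal.lift.{1} lam := by
    rw [hB2]; exact hmkprod _ _ hIioL hIioL
  have hmkB4 : #↥B4 = Cardinal.lift.{1} lam := by
    rw [hB4]; exact hmkprod _ _ hIioL (hmkprod _ _ hIioL (hmkprod _ _ hIioL hIioL))
  have hsubB : ∀ {X : Type 1} (BX : Set X), #↥BX ≤ Cardinal.lift.{1} lam →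
      #{s : Set X // s.Countable ∧ s ⊆ BX} ≤ Cardinal.lift.{1} lam := by
    intro X BX hBX
    refine le_trans (mk_countable_bounded_le _) ?_
    calc (#↥BX + 1) ^ (ℵ₀ : Cardinal.{1}) ≤ (Cardinal.lift.{1} lam + 1) ^ (ℵ₀ : Cardinal.{1}) :=
        Cardinal.power_le_power_right (add_le_add_left hBX 1)
      _ = Cardinal.lift.{1} lam := hliftpow
  have hGex : ∃ G : Set (Ordinal × Ordinal) × Set (Ordinal × Ordinal × Ordinal × Ordinal) →
      Ordinal,
      (∀ x, ((x.1.Countable ∧ x.1 ⊆ B2) ∧ (x.2.Countable ∧ x.2 ⊆ B4)) → G x < L) ∧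
      (∀ x y, ((x.1.Countable ∧ x.1 ⊆ B2) ∧ (x.2.Countable ∧ x.2 ⊆ B4)) →
        ((y.1.Countable ∧ y.1 ⊆ B2) ∧ (y.2.Countable ∧ y.2 ⊆ B4)) → G x = G y → x = y) := by
    have hle : #{x : Set (Ordinal × Ordinal) × Set (Ordinal × Ordinal × Ordinal × Ordinal) //
        (x.1.Countable ∧ x.1 ⊆ B2) ∧ (x.2.Countable ∧ x.2 ⊆ B4)} ≤ #(Set.Iio L) := by
      rw [Cardinal.mk_congr (Equiv.subtypeProdEquivProd
        (p := fun s : Set (Ordinal × Ordinal) => s.Countable ∧ s ⊆ B2)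
        (q := fun t : Set (Ordinal × Ordinal × Ordinal × Ordinal) => t.Countable ∧ t ⊆ B4)),
        Cardinal.mk_prod, Cardinal.lift_id, Cardinal.lift_id, hIioL]
      calc #{s : Set (Ordinal × Ordinal) // s.Countable ∧ s ⊆ B2} *
          #{s : Set (Ordinal × Ordinal × Ordinal × Ordinal) // s.Countable ∧ s ⊆ B4}
          ≤ Cardinal.lift.{1} lam * Cardinal.lift.{1} lam :=
            mul_le_mul' (hsubB _ hmkB2.le) (hsubB _ hmkB4.le)
        _ = Cardinal.lift.{1} lam := Cardinal.mul_eq_self haleph0L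
    obtain ⟨emb⟩ := (Cardinal.le_def _ _).1 hle
    refine ⟨fun x => if h : (x.1.Countable ∧ x.1 ⊆ B2) ∧ (x.2.Countable ∧ x.2 ⊆ B4)
      then (emb ⟨x, h⟩).1 else 0, ?_, ?_⟩
    · intro x hx
      simp only [dif_pos hx]
      exact (emb ⟨x, hx⟩).2
    · intro x y hx hy hee
      simp only [dif_pos hx, dif_pos hy] at hee
      have := emb.injective (Subtype.ext hee)
      exact congrArg Subtype.val this
  obtain ⟨G, hG1, hG2⟩ := hGex
  -- the codes
  set S1 : Set Ordinal → Set (Ordinal × Ordinal) := fun A =>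
    (fun ζ => (po0 (EEs δ κ A) ζ, e ζ (A ∩ Set.Iio (δ (ζ + 1))))) '' (EEs δ κ A) with hS1def
  set S2 : Set Ordinal → Set (Ordinal × Ordinal × Ordinal × Ordinal) := fun A =>
    (fun p : Ordinal × Ordinal => (po0 (EEs δ κ A) p.1, po0 (EEs δ κ A) p.2, F p.2 p.1,
      if eps p.2 p.1 then 1 else 0)) ''
      {p : Ordinal × Ordinal | p.1 ∈ EEs δ κ A ∧ p.2 ∈ EEs δ κ A ∧ p.1 < p.2} with hS2def
  have hbool : ∀ b c : Bool, ((if b then (1 : Ordinal) else 0) = if c then 1 else 0) → b = c := by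
    intro b c h
    cases b <;> cases c
    · rfl
    · exact absurd h.symm Ordinal.one_ne_zero
    · exact absurd h Ordinal.one_ne_zero
    · rfl
  have hone : (1 : Ordinal) < L := by
    rw [hL, Cardinal.lt_ord]
    simpa using lt_of_lt_of_le Cardinal.one_lt_aleph0 hinf
  have hzero : (0 : Ordinal) < L := lt_trans zero_lt_one hone
  -- legitimacy of the codes
  have hlegit : ∀ A : Set Ordinal, A.Countable →
      ((S1 A).Countable ∧ S1 A ⊆ B2) ∧ ((S2 A).Countable ∧ S2 A ⊆ B4) := by
    intro A hcA
    have hEc : (EEs δ κ A).Countable := EEs_countable hmono hsucc hcA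
    refine ⟨⟨(hEc.image _), ?_⟩, ⟨((hEc.prod hEc).mono
      (fun p hp => Set.mem_prod.2 ⟨hp.1, hp.2.1⟩)).image _, ?_⟩⟩
    · rintro _ ⟨ζ, hζ, rfl⟩
      refine Set.mem_prod.2 ⟨po0_lt_ord hEc haleph0_lt, ?_⟩
      exact (he ζ hζ.1).1 _ (hcA.mono Set.inter_subset_left) Set.inter_subset_right
    · rintro _ ⟨p, ⟨hp1, hp2, hplt⟩, rfl⟩
      refine Set.mem_prod.2 ⟨po0_lt_ord hEc haleph0_lt, Set.mem_prod.2
        ⟨po0_lt_ord hEc haleph0_lt, Set.mem_prod.2 ⟨(hF p.2 hp2.1).1 p.1 hplt, ?_⟩⟩⟩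
      by_cases hb : eps p.2 p.1
      · simp only [if_pos hb]
        exact hone
      · simp only [if_neg hb]
        exact hzero
  refine ⟨fun A => G (S1 A, S2 A), ?_, ?_⟩
  · intro A hAsub hcA hinfA
    exact hG1 _ (hlegit A hcA)
  · intro A B hAsub hBsub hcA hinfA hcB hinfB hKAB ξ hξκ hAne hBne
    have hEAc : (EEs δ κ A).Countable := EEs_countable hmono hsucc hcA
    have hEBc : (EEs δ κ B).Countable := EEs_countable hmono hsucc hcB
    have hpair := hG2 _ _ (hlegit A hcA) (hlegit B hcB) hKAB
    have hS1eq : S1 A = S1 B := congrArg Prod.fst hpair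
    have hS2eq : S2 A = S2 B := congrArg Prod.snd hpair
    have hξA : ξ ∈ EEs δ κ A := ⟨hξκ, hAne⟩
    have hξB : ξ ∈ EEs δ κ B := ⟨hξκ, hBne⟩
    rcases lt_trichotomy (po0 (EEs δ κ A) ξ) (po0 (EEs δ κ B) ξ) with hij | hij | hij
    · -- impossible
      exfalso
      obtain ⟨η', hη'B, hη'ξ, hpo⟩ := po0_surj hEBc hij
      have hmem : (po0 (EEs δ κ B) η', po0 (EEs δ κ B) ξ, F ξ η', if eps ξ η' then 1 else 0)
          ∈ S2 B := ⟨(η', ξ), ⟨hη'B, hξB, hη'ξ⟩, rfl⟩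
      rw [← hS2eq] at hmem
      obtain ⟨⟨η, ζ⟩, ⟨hηA, hζA, hηζ⟩, heq⟩ := hmem
      have h1 : po0 (EEs δ κ A) η = po0 (EEs δ κ B) η' := congrArg Prod.fst heq
      have h2 : po0 (EEs δ κ A) ζ = po0 (EEs δ κ B) ξ := congrArg (fun q => q.2.1) heq
      have h3 : F ζ η = F ξ η' := congrArg (fun q => q.2.2.1) heq
      have h4 : (if eps ζ η then (1:Ordinal) else 0) = if eps ξ η' then 1 else 0 :=
        congrArg (fun q => q.2.2.2) heq
      have hηξ : η = ξ := po0_inj hEAc hηA hξA (by rw [h1, hpo])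
      have heps : eps ζ η = eps ξ η' := hbool _ _ h4
      rw [hηξ] at hηζ h3 heps
      exact hP η' ξ ζ hξκ hη'ξ hηζ h3 heps
    · -- the main case: equal positions
      have hmem : (po0 (EEs δ κ A) ξ, e ξ (A ∩ Set.Iio (δ (ξ + 1)))) ∈ S1 A := ⟨ξ, hξA, rfl⟩
      rw [hS1eq] at hmem
      obtain ⟨ξ', hξ'B, heq⟩ := hmem
      have h1 : po0 (EEs δ κ B) ξ' = po0 (EEs δ κ A) ξ := congrArg Prod.fst heq
      have h2 : e ξ' (B ∩ Set.Iio (δ (ξ' + 1))) = e ξ (A ∩ Set.Iio (δ (ξ + 1))) :=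
        congrArg Prod.snd heq
      have hξ'ξ : ξ' = ξ := po0_inj hEBc hξ'B hξB (by rw [h1, hij])
      subst hξ'ξ
      exact ((he ξ' hξκ).2 _ _ (hcA.mono Set.inter_subset_left) Set.inter_subset_right
        (hcB.mono Set.inter_subset_left) Set.inter_subset_right h2.symm)
    · -- impossible
      exfalso
      obtain ⟨η'', hη''A, hη''ξ, hpo⟩ := po0_surj hEAc hij
      have hmem : (po0 (EEs δ κ A) η'', po0 (EEs δ κ A) ξ, F ξ η'', if eps ξ η'' then 1 else 0)
          ∈ S2 A := ⟨(η'', ξ), ⟨hη''A, hξA, hη''ξ⟩, rfl⟩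
      rw [hS2eq] at hmem
      obtain ⟨⟨η, ζ⟩, ⟨hηB, hζB, hηζ⟩, heq⟩ := hmem
      have h1 : po0 (EEs δ κ B) η = po0 (EEs δ κ A) η'' := congrArg Prod.fst heq
      have h3 : F ζ η = F ξ η'' := congrArg (fun q => q.2.2.1) heq
      have h4 : (if eps ζ η then (1:Ordinal) else 0) = if eps ξ η'' then 1 else 0 :=
        congrArg (fun q => q.2.2.2) heq
      have hηξ : η = ξ := po0_inj hEBc hηB hξB (by rw [h1, hpo])
      have heps : eps ζ η = eps ξ η'' := hbool _ _ h4
      rw [hηξ] at hηζ h3 heps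
      exact hP η'' ξ ζ hξκ hη''ξ hηζ h3 heps
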